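/- arXiv:1605.01002 — 4 statements merged into one kernel-verified Lean document; each statement's English description precedes it below -/
import Mathlib

section
/- Let A, m > 0 and let λ_A ≥ A + m satisfy 2λ_A^3 - 3λ_A^2(A+m) + A^3 = 0. Set a = A/λ_A, so 0 < a < 1. Define w: [-1,1] → ℝ by w(y) = A(-y²/(2a) + |y| + 1/(2a) - 1) for a < |y| ≤ 1 and w(y) = A(a-1)²/(2a) for |y| ≤ a. Then ∫_{-1}^{1} w(y) dy = m. -/
/-- Let `A, m > 0` and `λ_A ≥ A + m` satisfy `2λ_A³ - 3λ_A²(A+m) + A³ = 0`.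
Set `a = A/λ_A`; then `0 < a < 1`, and the piecewise function `w` (equal to
`A(-y²/(2a) + |y| + 1/(2a) - 1)` for `a < |y| ≤ 1` and to `A(a-1)²/(2a)` for
`|y| ≤ a`) satisfies `∫_{-1}^{1} w(y) dy = m`. -/
theorem explicit_minimizer_volume (A m lam a : ℝ) (hA : 0 < A) (hm : 0 < m)
    (hlam : A + m ≤ lam)
    (hroot : 2 * lam ^ 3 - 3 * lam ^ 2 * (A + m) + A ^ 3 = 0)
    (ha : a = A / lam)
    (w : ℝ → ℝ)
    (hw1 : ∀ y : ℝ, |y| ≤ a → w y = A * ((a - 1) ^ 2 / (2 * a)))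
    (hw2 : ∀ y : ℝ, a < |y| → |y| ≤ 1 →
      w y = A * (-y ^ 2 / (2 * a) + |y| + 1 / (2 * a) - 1)) :
    (0 < a ∧ a < 1) ∧ ∫ y in (-1 : ℝ)..1, w y = m := by
  have hlam0 : 0 < lam := lt_of_lt_of_le (by linarith) hlam
  have ha0 : 0 < a := ha ▸ div_pos hA hlam0
  have ha1 : a < 1 := by rw [ha, div_lt_one hlam0]; linarith
  have ha0' : (2 : ℝ) * a ≠ 0 := by positivity
  -- the three local formulas
  set g1 : ℝ → ℝ := fun y => A * (-y ^ 2 / (2 * a) + -y + 1 / (2 * a) - 1) with hg1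
  set g2 : ℝ → ℝ := fun _ => A * ((a - 1) ^ 2 / (2 * a)) with hg2
  set g3 : ℝ → ℝ := fun y => A * (-y ^ 2 / (2 * a) + y + 1 / (2 * a) - 1) with hg3
  have hcont1 : Continuous g1 := by fun_prop
  have hcont3 : Continuous g3 := by fun_prop
  -- boundary identity
  have hane : a ≠ 0 := ne_of_gt ha0
  have hbdry : A * ((a - 1) ^ 2 / (2 * a)) = A * (-a ^ 2 / (2 * a) + a + 1 / (2 * a) - 1) := by
    rw [mul_eq_mul_left_iff]
    left
    field_simp
    ring
  have heq1 : Set.EqOn w g1 (Set.uIcc (-1 : ℝ) (-a)) := by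
    intro y hy
    rw [Set.uIcc_of_le (by linarith)] at hy
    obtain ⟨h1, h2⟩ := hy
    have habs : |y| = -y := abs_of_nonpos (by linarith)
    rcases eq_or_lt_of_le h2 with h | h
    · subst h
      rw [hw1 (-a) (by rw [abs_neg, abs_of_pos ha0]), hg1]
      simp only
      rw [hbdry]
      ring
    · rw [hw2 y (by rw [habs]; linarith) (by rw [habs]; linarith), habs]
  have heq2 : Set.EqOn w g2 (Set.uIcc (-a : ℝ) a) := by
    intro y hy
    rw [Set.uIcc_of_le (by linarith)] at hy
    exact hw1 y (abs_le.2 hy)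
  have heq3 : Set.EqOn w g3 (Set.uIcc (a : ℝ) 1) := by
    intro y hy
    rw [Set.uIcc_of_le (by linarith)] at hy
    obtain ⟨h1, h2⟩ := hy
    have habs : |y| = y := abs_of_nonneg (by linarith)
    rcases eq_or_lt_of_le h1 with h | h
    · rw [← h, hw1 a (by rw [abs_of_pos ha0]), hg3]
      simpa using hbdry
    · rw [hw2 y (by rw [habs]; linarith) (by rw [habs]; linarith), habs]
  -- integrability of w on each piece
  have hi1 : IntervalIntegrable w MeasureTheory.volume (-1) (-a) :=
    (hcont1.intervalIntegrable _ _).congr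
      (fun x hx => (heq1 (Set.uIoc_subset_uIcc hx)).symm)
  have hi2 : IntervalIntegrable w MeasureTheory.volume (-a) a :=
    ((continuous_const : Continuous g2).intervalIntegrable _ _).congr
      (fun x hx => (heq2 (Set.uIoc_subset_uIcc hx)).symm)
  have hi3 : IntervalIntegrable w MeasureTheory.volume a 1 :=
    (hcont3.intervalIntegrable _ _).congr
      (fun x hx => (heq3 (Set.uIoc_subset_uIcc hx)).symm)
  -- antiderivatives
  have hd1 : ∀ x : ℝ, HasDerivAt (fun y : ℝ =>
      A * (-y ^ 3 / (6 * a) + -(y ^ 2) / 2 + (1 / (2 * a) - 1) * y)) (g1 x) x := by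
    intro x
    have h := ((((hasDerivAt_pow 3 x).div_const (6 * a)).neg.add
      ((hasDerivAt_pow 2 x).div_const 2).neg).add
      ((hasDerivAt_id' x).const_mul (1 / (2 * a) - 1))).const_mul A
    convert h using 1
    · rfl
    · rfl
    · ext y; simp only [Pi.add_apply, Pi.neg_apply]; ring
    · rw [hg1]; push_cast; ring
  have hd3 : ∀ x : ℝ, HasDerivAt (fun y : ℝ =>
      A * (-y ^ 3 / (6 * a) + y ^ 2 / 2 + (1 / (2 * a) - 1) * y)) (g3 x) x := by
    intro x
    have h := ((((hasDerivAt_pow 3 x).div_const (6 * a)).neg.add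
      ((hasDerivAt_pow 2 x).div_const 2)).add
      ((hasDerivAt_id x).const_mul (1 / (2 * a) - 1))).const_mul A
    convert h using 1
    · rfl
    · rfl
    · ext y; simp only [id_eq, Pi.add_apply, Pi.neg_apply]; ring
    · rw [hg3]; push_cast; ring
  -- compute each integral
  have I1 : ∫ y in (-1 : ℝ)..(-a), w y =
      (A * (-(-a) ^ 3 / (6 * a) + -((-a) ^ 2) / 2 + (1 / (2 * a) - 1) * (-a))) -
      (A * (-(-1 : ℝ) ^ 3 / (6 * a) + -((-1 : ℝ) ^ 2) / 2 + (1 / (2 * a) - 1) * (-1))) := by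
    rw [intervalIntegral.integral_congr heq1]
    exact intervalIntegral.integral_eq_sub_of_hasDerivAt (fun x _ => hd1 x)
      (hcont1.intervalIntegrable _ _)
  have I2 : ∫ y in (-a : ℝ)..a, w y = (a - (-a)) * (A * ((a - 1) ^ 2 / (2 * a))) := by
    rw [intervalIntegral.integral_congr heq2, hg2]
    simp [smul_eq_mul]
    ring
  have I3 : ∫ y in (a : ℝ)..1, w y =
      (A * (-(1 : ℝ) ^ 3 / (6 * a) + (1 : ℝ) ^ 2 / 2 + (1 / (2 * a) - 1) * 1)) -
      (A * (-a ^ 3 / (6 * a) + a ^ 2 / 2 + (1 / (2 * a) - 1) * a)) := by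
    rw [intervalIntegral.integral_congr heq3]
    exact intervalIntegral.integral_eq_sub_of_hasDerivAt (fun x _ => hd3 x)
      (hcont3.intervalIntegrable _ _)
  have split : ∫ y in (-1 : ℝ)..1, w y =
      (∫ y in (-1 : ℝ)..(-a), w y) + (∫ y in (-a : ℝ)..a, w y) + (∫ y in (a : ℝ)..1, w y) := by
    rw [intervalIntegral.integral_add_adjacent_intervals hi1 hi2,
      intervalIntegral.integral_add_adjacent_intervals (hi1.trans hi2) hi3]
  refine ⟨⟨ha0, ha1⟩, ?_⟩
  rw [split, I1, I2, I3]
  have hlamne : lam ≠ 0 := ne_of_gt hlam0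
  have hAne : A ≠ 0 := ne_of_gt hA
  have total : (A * (-(-a) ^ 3 / (6 * a) + -((-a) ^ 2) / 2 + (1 / (2 * a) - 1) * (-a))) -
      (A * (-(-1 : ℝ) ^ 3 / (6 * a) + -((-1 : ℝ) ^ 2) / 2 + (1 / (2 * a) - 1) * (-1))) +
      (a - (-a)) * (A * ((a - 1) ^ 2 / (2 * a))) +
      ((A * (-(1 : ℝ) ^ 3 / (6 * a) + (1 : ℝ) ^ 2 / 2 + (1 / (2 * a) - 1) * 1)) -
      (A * (-a ^ 3 / (6 * a) + a ^ 2 / 2 + (1 / (2 * a) - 1) * a))) =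
      A * (a ^ 3 - 3 * a + 2) / (3 * a) := by
    field_simp
    ring
  rw [total, ha]
  have hm' : 3 * lam ^ 2 * m = 2 * lam ^ 3 - 3 * lam ^ 2 * A + A ^ 3 := by
    linear_combination -hroot
  field_simp
  linear_combination (-1 : ℝ) * hm'
end

section
/- Let A, m > 0 and let w be the function from the explicit 1D solution (w(y) = A(-y²/(2a)+|y|+1/(2a)-1) for a<|y|≤1, w(y)=A(a-1)²/(2a) for |y|≤a, with a=A/λ_A). Then for every v ∈ W_0^{1,2}(-1,1) with ∫_{-1}^1 v = m, one has ∫_{-1}^1 (|v'|²/2 + A|v'|) dy ≥ ∫_{-1}^1 (|w'|²/2 + A|w'|) dy. -/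
open MeasureTheory intervalIntegral

/-- An interval-integrability criterion via agreement with a continuous function. -/
lemma eqOn_intervalIntegrable {f g : ℝ → ℝ} {c d : ℝ} (hcd : c ≤ d)
    (hg : Continuous g) (heq : Set.EqOn f g (Set.Icc c d)) :
    IntervalIntegrable f volume c d := by
  apply (hg.intervalIntegrable c d).congr
  intro x hx
  rw [Set.uIoc_of_le hcd] at hx
  exact (heq (Set.Ioc_subset_Icc_self hx)).symm

lemma eqOn_integral_eq {f g : ℝ → ℝ} {c d : ℝ} (hcd : c ≤ d)
    (heq : Set.EqOn f g (Set.Icc c d)) :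
    ∫ y in c..d, f y = ∫ y in c..d, g y :=
  intervalIntegral.integral_congr (Set.uIcc_of_le hcd ▸ heq)

/-- Fubini: integrating the primitive. -/
lemma integral_primitive_eq (dv : ℝ → ℝ) (hdv : IntervalIntegrable dv volume (-1) 1) :
    ∫ y in (-1:ℝ)..1, (∫ t in (-1:ℝ)..y, dv t) = ∫ t in (-1:ℝ)..1, (1 - t) * dv t := by
  set T : Set ℝ := Set.Ioc (-1 : ℝ) 1 with hT
  have hIOn : IntegrableOn dv T volume := by
    rw [hT]
    exact (intervalIntegrable_iff_integrableOn_Ioc_of_le (by norm_num)).mp hdv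
  set μ : Measure ℝ := volume.restrict T with hμ
  have hμT : μ Set.univ ≠ ⊤ := by
    simp [hμ, hT, Measure.restrict_apply, Real.volume_Ioc]
  set F : ℝ × ℝ → ℝ := Set.indicator {p : ℝ × ℝ | p.2 ≤ p.1} (fun p => dv p.2) with hF
  have hm1 : Integrable (fun p : ℝ × ℝ => dv p.2) (μ.prod μ) := by
    have hmap : Measure.map Prod.snd (μ.prod μ) = (μ Set.univ) • μ := Measure.map_snd_prod
    have h1 : Integrable dv ((μ Set.univ) • μ) := by
      apply Integrable.smul_measure _ hμT
      exact hIOn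
    exact Integrable.comp_aemeasurable (hmap ▸ h1) measurable_snd.aemeasurable
  have hFint : Integrable F (μ.prod μ) :=
    hm1.indicator (measurableSet_le measurable_snd measurable_fst)
  have hswap : ∫ y, (∫ t, F (y, t) ∂μ) ∂μ = ∫ t, (∫ y, F (y, t) ∂μ) ∂μ := by
    apply MeasureTheory.integral_integral_swap
    exact hFint
  have hL : ∀ y ∈ T, (∫ t, F (y, t) ∂μ) = ∫ t in (-1:ℝ)..y, dv t := by
    intro y hy
    have h1 : (fun t => F (y, t)) = (Set.Iic y).indicator dv := by
      funext t
      by_cases h : t ≤ y <;> simp [hF, Set.indicator, h]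
    rw [h1, hμ, MeasureTheory.integral_indicator measurableSet_Iic,
      Measure.restrict_restrict measurableSet_Iic]
    have h2 : Set.Iic y ∩ T = Set.Ioc (-1) y := by
      rw [hT]; ext t
      simp only [Set.mem_inter_iff, Set.mem_Iic, Set.mem_Ioc]
      constructor
      · rintro ⟨h1, h2, h3⟩; exact ⟨h2, h1⟩
      · rintro ⟨h1, h2⟩; exact ⟨h2, h1, h2.trans hy.2⟩
    rw [h2, intervalIntegral.integral_of_le (by linarith [hy.1])]
  have hR : ∀ t ∈ T, (∫ y, F (y, t) ∂μ) = (1 - t) * dv t := by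
    intro t ht
    have h1 : (fun y => F (y, t)) = (Set.Ici t).indicator (fun _ => dv t) := by
      funext y
      by_cases h : t ≤ y <;> simp [hF, Set.indicator, h]
    rw [h1, hμ, MeasureTheory.integral_indicator measurableSet_Ici,
      Measure.restrict_restrict measurableSet_Ici]
    have h2 : Set.Ici t ∩ T = Set.Icc t 1 := by
      rw [hT]; ext z
      simp only [Set.mem_inter_iff, Set.mem_Ici, Set.mem_Ioc, Set.mem_Icc]
      constructor
      · rintro ⟨h1, h2, h3⟩; exact ⟨h1, h3⟩
      · rintro ⟨h1, h2⟩; exact ⟨h1, lt_of_lt_of_le ht.1 h1, h2⟩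
    rw [h2, setIntegral_const, Real.volume_real_Icc_of_le (by linarith [ht.2]), smul_eq_mul]
  calc ∫ y in (-1:ℝ)..1, (∫ t in (-1:ℝ)..y, dv t)
      = ∫ y, (∫ t, F (y, t) ∂μ) ∂μ := by
        rw [intervalIntegral.integral_of_le (by norm_num), hμ]
        exact (setIntegral_congr_fun measurableSet_Ioc (fun y hy => (hL y hy))).symm
    _ = ∫ t, (∫ y, F (y, t) ∂μ) ∂μ := hswap
    _ = ∫ t in (-1:ℝ)..1, (1 - t) * dv t := by
        rw [intervalIntegral.integral_of_le (by norm_num), hμ]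
        exact setIntegral_congr_fun measurableSet_Ioc (fun t ht => (hR t ht))

set_option maxHeartbeats 2000000 in
/-- The explicit profile `w` (with derivative `w'(y) = 0` for `|y| ≤ a` and
`w'(y) = A(-y/a + sign y)` for `a < |y|`) minimizes the energy
`ε_A(v) = ∫_{-1}^1 |v'|²/2 + A|v'|` among all `v ∈ W₀^{1,2}(-1,1)` with
`∫_{-1}^1 v = m`.  A `W₀^{1,2}` function is encoded by a representative `v`
given as the primitive of its (square integrable) weak derivative `dv`, with
zero boundary values. -/
theorem explicit_profile_minimizes (A m lam a : ℝ) (hA : 0 < A) (hm : 0 < m)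
    (hlam : A + m ≤ lam)
    (hroot : 2 * lam ^ 3 - 3 * lam ^ 2 * (A + m) + A ^ 3 = 0)
    (ha : a = A / lam)
    (v dv : ℝ → ℝ)
    (hdv : IntervalIntegrable dv MeasureTheory.volume (-1) 1)
    (hdv2 : IntervalIntegrable (fun y => (dv y) ^ 2) MeasureTheory.volume (-1) 1)
    (hrep : ∀ y ∈ Set.Icc (-1 : ℝ) 1, v y = ∫ t in (-1 : ℝ)..y, dv t)
    (hv1 : v 1 = 0)
    (hvm : ∫ y in (-1 : ℝ)..1, v y = m) :
    (∫ y in (-1 : ℝ)..1, ((dv y) ^ 2 / 2 + A * |dv y|)) ≥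
      ∫ y in (-1 : ℝ)..1,
        (((if |y| ≤ a then (0 : ℝ) else A * (-y / a + Real.sign y)) ^ 2) / 2 +
          A * |if |y| ≤ a then (0 : ℝ) else A * (-y / a + Real.sign y)|) := by
  have hlam0 : 0 < lam := by linarith
  have ha0 : 0 < a := by rw [ha]; positivity
  have hAa : lam * a = A := by rw [ha]; field_simp
  have ha1 : a < 1 := by
    rw [ha, div_lt_one hlam0]; linarith
  set q : ℝ → ℝ := fun y => if |y| ≤ a then (0:ℝ) else A * (-y / a + Real.sign y) with hqdef
  set r : ℝ → ℝ := fun y => (q y) ^ 2 / 2 + A * |q y| with hrdef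
  -- the three pieces of q
  have hqR : Set.EqOn q (fun y => lam * (a - y)) (Set.Icc a 1) := by
    intro y hy
    rcases eq_or_lt_of_le hy.1 with h | h
    · have : |y| ≤ a := by rw [← h, abs_of_pos ha0]
      simp only [hqdef, this, if_true]; rw [← h]; ring
    · have hy0 : 0 < y := lt_trans ha0 h
      have : ¬ |y| ≤ a := by rw [abs_of_pos hy0]; linarith
      simp only [hqdef, this, if_false, Real.sign_of_pos hy0]
      rw [ha]; field_simp; ring
  have hqL : Set.EqOn q (fun y => lam * (-a - y)) (Set.Icc (-1) (-a)) := by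
    intro y hy
    rcases eq_or_lt_of_le hy.2 with h | h
    · have : |y| ≤ a := by rw [h, abs_of_neg (by linarith : (-a:ℝ) < 0)]; linarith
      simp only [hqdef, this, if_true]; rw [h]; ring
    · have hy0 : y < 0 := lt_trans h (by linarith)
      have : ¬ |y| ≤ a := by rw [abs_of_neg hy0]; linarith
      simp only [hqdef, this, if_false, Real.sign_of_neg hy0]
      rw [ha]; field_simp; ring
  have hqM : Set.EqOn q (fun _ => (0:ℝ)) (Set.Icc (-a) a) := by
    intro y hy
    have : |y| ≤ a := abs_le.mpr ⟨hy.1, hy.2⟩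
    simp only [hqdef, this, if_true]
  have hma : (-1 : ℝ) ≤ -a := by linarith
  have haa : (-a : ℝ) ≤ a := by linarith
  have ha1' : a ≤ 1 := ha1.le
  -- integrability of q, y*q, r
  have hqI1 : IntervalIntegrable q volume (-1) (-a) :=
    eqOn_intervalIntegrable hma (g := fun y => lam * (-a - y)) (by fun_prop) hqL
  have hqI2 : IntervalIntegrable q volume (-a) a :=
    eqOn_intervalIntegrable haa continuous_const hqM
  have hqI3 : IntervalIntegrable q volume a 1 :=
    eqOn_intervalIntegrable ha1' (g := fun y => lam * (a - y)) (by fun_prop) hqR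
  have hqI : IntervalIntegrable q volume (-1) 1 := (hqI1.trans hqI2).trans hqI3
  have hyqI1 : IntervalIntegrable (fun y => y * q y) volume (-1) (-a) :=
    eqOn_intervalIntegrable hma (g := fun y => y * (lam * (-a - y))) (by fun_prop)
      (fun y hy => by show y * q y = _; rw [hqL hy])
  have hyqI2 : IntervalIntegrable (fun y => y * q y) volume (-a) a :=
    eqOn_intervalIntegrable haa (g := fun _ => (0:ℝ)) continuous_const
      (fun y hy => by show y * q y = _; rw [hqM hy]; ring)
  have hyqI3 : IntervalIntegrable (fun y => y * q y) volume a 1 :=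
    eqOn_intervalIntegrable ha1' (g := fun y => y * (lam * (a - y))) (by fun_prop)
      (fun y hy => by show y * q y = _; rw [hqR hy])
  have hyqI : IntervalIntegrable (fun y => y * q y) volume (-1) 1 := (hyqI1.trans hyqI2).trans hyqI3
  have hrI1 : IntervalIntegrable r volume (-1) (-a) :=
    eqOn_intervalIntegrable hma (g := fun y => (lam * (-a - y)) ^ 2 / 2 + A * (lam * (-a - y)))
      (by fun_prop)
      (fun y hy => by
        show q y ^ 2 / 2 + A * |q y| = _
        rw [hqL hy]
        have : |lam * (-a - y)| = lam * (-a - y) := abs_of_nonneg (by nlinarith [hy.2])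
        rw [this])
  have hrI2 : IntervalIntegrable r volume (-a) a :=
    eqOn_intervalIntegrable haa (g := fun _ => (0:ℝ)) continuous_const
      (fun y hy => by show q y ^ 2 / 2 + A * |q y| = _; rw [hqM hy]; simp)
  have hrI3 : IntervalIntegrable r volume a 1 :=
    eqOn_intervalIntegrable ha1' (g := fun y => (lam * (a - y)) ^ 2 / 2 + A * (lam * (y - a)))
      (by fun_prop)
      (fun y hy => by
        show q y ^ 2 / 2 + A * |q y| = _
        rw [hqR hy]
        have : |lam * (a - y)| = lam * (y - a) := by
          rw [abs_of_nonpos (by nlinarith [hy.1])]; ring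
        rw [this])
  have hrI : IntervalIntegrable r volume (-1) 1 := (hrI1.trans hrI2).trans hrI3
  -- value of ∫ y * q y
  have hyq_val : ∫ y in (-1:ℝ)..1, y * q y = -m := by
    have hsplit : ∫ y in (-1:ℝ)..1, y * q y =
        (∫ y in (-1:ℝ)..(-a), y * q y) + (∫ y in (-a:ℝ)..a, y * q y) +
          (∫ y in (a:ℝ)..1, y * q y) := by
      rw [integral_add_adjacent_intervals hyqI1 hyqI2,
        integral_add_adjacent_intervals (hyqI1.trans hyqI2) hyqI3]
    have hv1' : ∫ y in (-1:ℝ)..(-a), y * q y = ∫ y in (-1:ℝ)..(-a), (lam * (-a) * y - lam * y ^ 2) := by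
      apply eqOn_integral_eq hma
      intro y hy; show y * q y = _; rw [hqL hy]; ring
    have hv2' : ∫ y in (-a:ℝ)..a, y * q y = 0 := by
      rw [eqOn_integral_eq haa (g := fun _ => (0:ℝ))
        (fun y hy => by show y * q y = _; rw [hqM hy]; ring)]
      simp
    have hv3' : ∫ y in (a:ℝ)..1, y * q y = ∫ y in (a:ℝ)..1, (lam * a * y - lam * y ^ 2) := by
      apply eqOn_integral_eq ha1'
      intro y hy; show y * q y = _; rw [hqR hy]; ring
    have hpoly : ∀ c e f : ℝ, ∫ y in e..f, (lam * c * y - lam * y ^ 2) =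
        lam * c * ((f ^ 2 - e ^ 2) / 2) - lam * ((f ^ 3 - e ^ 3) / 3) := by
      intro c e f
      rw [intervalIntegral.integral_sub (by apply Continuous.intervalIntegrable; fun_prop)
        (by apply Continuous.intervalIntegrable; fun_prop),
        intervalIntegral.integral_const_mul, intervalIntegral.integral_const_mul,
        integral_id, integral_pow]
      norm_num
    rw [hsplit, hv1', hv2', hv3', hpoly, hpoly]
    rw [ha]
    have hlamne : lam ≠ 0 := ne_of_gt hlam0
    field_simp
    linear_combination (-2) * hroot
  -- value of ∫ y * dv y
  have hdv0 : ∫ t in (-1:ℝ)..1, dv t = 0 := by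
    have := hrep 1 ⟨by norm_num, le_refl 1⟩
    rw [hv1] at this; exact this.symm
  have hydvI : IntervalIntegrable (fun y => y * dv y) volume (-1) 1 :=
    hdv.continuousOn_mul continuous_id.continuousOn
  have hydv_val : ∫ y in (-1:ℝ)..1, y * dv y = -m := by
    have hprim : ∫ y in (-1:ℝ)..1, (∫ t in (-1:ℝ)..y, dv t) = m := by
      rw [← hvm]
      apply (intervalIntegral.integral_congr _).symm
      intro y hy
      exact hrep y (by rwa [Set.uIcc_of_le (by norm_num : (-1:ℝ) ≤ 1)] at hy)
    have hfub := integral_primitive_eq dv hdv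
    rw [hprim] at hfub
    have hsub : ∫ t in (-1:ℝ)..1, (1 - t) * dv t =
        (∫ t in (-1:ℝ)..1, dv t) - ∫ t in (-1:ℝ)..1, t * dv t := by
      rw [← intervalIntegral.integral_sub hdv hydvI]
      apply intervalIntegral.integral_congr
      intro y _; ring
    rw [hsub, hdv0] at hfub
    linarith
  -- pointwise inequality
  have hpt : ∀ y ∈ Set.Icc (-1:ℝ) 1,
      r y - lam * (y * dv y) + lam * (y * q y) ≤ (dv y) ^ 2 / 2 + A * |dv y| := by
    intro y _
    set p := dv y with hp
    have key : r y - lam * y * (p - q y) ≤ p ^ 2 / 2 + A * |p| := by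
      by_cases h : |y| ≤ a
      · have hq0 : q y = 0 := by simp only [hqdef, h, if_true]
        have hr0 : r y = 0 ^ 2 / 2 + A * |(0:ℝ)| := by
          show q y ^ 2 / 2 + A * |q y| = _; rw [hq0]
        rw [hr0, hq0]
        have h1 : -(lam * y * p) ≤ lam * |y| * |p| := by
          calc -(lam * y * p) ≤ |lam * y * p| := neg_le_abs _
            _ = lam * |y| * |p| := by rw [abs_mul, abs_mul, abs_of_pos hlam0]
        have h2 : lam * |y| * |p| ≤ A * |p| := by
          apply mul_le_mul_of_nonneg_right _ (abs_nonneg p)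
          calc lam * |y| ≤ lam * a := by nlinarith
            _ = A := hAa
        have h0 : |(0:ℝ)| = 0 := abs_zero
        nlinarith [sq_nonneg p]
      · rcases lt_abs.mp (not_le.mp h) with hy | hy
        · have hy0 : 0 < y := lt_trans ha0 hy
          have hqv : q y = lam * (a - y) := by
            simp only [hqdef, h, if_false, Real.sign_of_pos hy0]
            rw [ha]; field_simp; ring
          have habs : |q y| = lam * (y - a) := by
            rw [hqv, abs_of_nonpos (by nlinarith)]; ring
          have hrv : r y = (lam * (a - y)) ^ 2 / 2 + A * (lam * (y - a)) := by
            show q y ^ 2 / 2 + A * |q y| = _; rw [habs, hqv]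
          rw [hrv, hqv]
          have hA' : A = lam * a := hAa.symm
          rw [hA']
          nlinarith [sq_nonneg (p - lam * (a - y)),
            mul_nonneg (mul_nonneg hlam0.le ha0.le)
              (by linarith [neg_abs_le p] : (0:ℝ) ≤ |p| + p)]
        · have hy' : y < -a := by linarith
          have hy0 : y < 0 := by linarith
          have hqv : q y = lam * (-a - y) := by
            simp only [hqdef, h, if_false, Real.sign_of_neg hy0]
            rw [ha]; field_simp; ring
          have habs : |q y| = lam * (-a - y) := by
            rw [hqv, abs_of_nonneg (by nlinarith)]
          have hrv : r y = (lam * (-a - y)) ^ 2 / 2 + A * (lam * (-a - y)) := by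
            show q y ^ 2 / 2 + A * |q y| = _; rw [habs, hqv]
          rw [hrv, hqv]
          have hA' : A = lam * a := hAa.symm
          rw [hA']
          nlinarith [sq_nonneg (p - lam * (-a - y)),
            mul_nonneg (mul_nonneg hlam0.le ha0.le)
              (by linarith [le_abs_self p] : (0:ℝ) ≤ |p| - p)]
    linarith [key, (by ring : r y - lam * y * (p - q y) = r y - lam * (y * p) + lam * (y * q y))]
  -- integrabilities of both sides
  have hFdvI : IntervalIntegrable (fun y => (dv y) ^ 2 / 2 + A * |dv y|) volume (-1) 1 :=
    (hdv2.div_const 2).add (hdv.abs.const_mul A)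
  have hSI : IntervalIntegrable (fun y => r y - lam * (y * dv y) + lam * (y * q y)) volume (-1) 1 :=
    (hrI.sub (hydvI.const_mul lam)).add (hyqI.const_mul lam)
  have hmono := intervalIntegral.integral_mono_on (μ := volume) (by norm_num : (-1:ℝ) ≤ 1)
    hSI hFdvI hpt
  have hval : ∫ y in (-1:ℝ)..1, (r y - lam * (y * dv y) + lam * (y * q y)) =
      ∫ y in (-1:ℝ)..1, r y := by
    rw [intervalIntegral.integral_add (hrI.sub (hydvI.const_mul lam)) (hyqI.const_mul lam),
      intervalIntegral.integral_sub hrI (hydvI.const_mul lam),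
      intervalIntegral.integral_const_mul, intervalIntegral.integral_const_mul,
      hydv_val, hyq_val]
    ring
  rw [hval] at hmono
  exact hmono
end

section
/- Let A, m > 0, with λ_A ≥ A+m the root of 2λ³-3λ²(A+m)+A³=0 and a = A/λ_A. Then the minimal energy I^A_m = (A²/a)(2(1-a)³/(3a) + (1-a)²) equals m·λ_A, and consequently I^A_m ≥ m(A+m) ≥ A·m. -/
/-- With `A, m > 0`, `λ_A ≥ A+m` the root of `2λ³-3λ²(A+m)+A³=0` and
`a = A/λ_A`, the minimal energy `I^A_m = (A²/a)(2(1-a)³/(3a) + (1-a)²)`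
equals `m·λ_A`, and consequently `I^A_m ≥ m(A+m) ≥ A·m`. -/
theorem minimal_energy_value (A m lam a : ℝ) (hA : 0 < A) (hm : 0 < m)
    (hlam : A + m ≤ lam)
    (hroot : 2 * lam ^ 3 - 3 * lam ^ 2 * (A + m) + A ^ 3 = 0)
    (ha : a = A / lam) :
    (A ^ 2 / a) * (2 * (1 - a) ^ 3 / (3 * a) + (1 - a) ^ 2) = m * lam ∧
      m * (A + m) ≤ m * lam ∧ A * m ≤ m * (A + m) := by
  have hlam0 : 0 < lam := lt_of_lt_of_le (by linarith) hlam
  have ha0 : a ≠ 0 := by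
    rw [ha]; positivity
  refine ⟨?_, by nlinarith, by nlinarith⟩
  subst ha
  field_simp
  linear_combination hroot
end

section
/- Let λ > 1 and let φ: [-A_λ, A_λ] → ℝ be defined implicitly by f_λ(φ(y)) = f_λ(1/(λ-1)) - |y|, where f_λ is as above and A_λ = f_λ(1/(λ-1)) - f_λ(1/λ). Then φ satisfies, for y in the open intervals where it is differentiable, the first-order ODE φ(y)(λ - 1/√(1+|φ'(y)|²)) = 1, and 1/λ ≤ φ(y) ≤ 1/(λ-1) for all y. -/
/-- `f_λ(Z) = (λ²-1)^{-3/2} [arcsin((λ²-1)Z - λ) - λ√(1 - ((λ²-1)Z - λ)²)]`. -/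
noncomputable def fl (lam Z : ℝ) : ℝ :=
  (Real.arcsin ((lam ^ 2 - 1) * Z - lam) -
    lam * Real.sqrt (1 - ((lam ^ 2 - 1) * Z - lam) ^ 2)) /
  Real.sqrt ((lam ^ 2 - 1) ^ 3)

/-- `A_λ = f_λ(1/(λ-1)) - f_λ(1/λ)`. -/
noncomputable def Al (lam : ℝ) : ℝ := fl lam (1 / (lam - 1)) - fl lam (1 / lam)

/-- Let `λ > 1` and let `φ : [-A_λ, A_λ] → [1/λ, 1/(λ-1)]` be defined
implicitly by `f_λ(φ(y)) = f_λ(1/(λ-1)) - |y|`.  Then `φ` satisfies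
`1/λ ≤ φ ≤ 1/(λ-1)` and, at interior points `y ≠ 0` where it is
differentiable, the first-order ODE `φ(y)(λ - 1/√(1+|φ'(y)|²)) = 1`. -/
theorem implicit_profile_ode (lam : ℝ) (hlam : 1 < lam) (phi : ℝ → ℝ)
    (hrange : ∀ y ∈ Set.Icc (-Al lam) (Al lam),
      phi y ∈ Set.Icc (1 / lam) (1 / (lam - 1)))
    (himp : ∀ y ∈ Set.Icc (-Al lam) (Al lam),
      fl lam (phi y) = fl lam (1 / (lam - 1)) - |y|) :
    (∀ y ∈ Set.Icc (-Al lam) (Al lam),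
      1 / lam ≤ phi y ∧ phi y ≤ 1 / (lam - 1)) ∧
    (∀ y ∈ Set.Ioo (-Al lam) (Al lam), y ≠ 0 → DifferentiableAt ℝ phi y →
      phi y * (lam - 1 / Real.sqrt (1 + (deriv phi y) ^ 2)) = 1) := by
  constructor
  · intro y hy
    exact ⟨(hrange y hy).1, (hrange y hy).2⟩
  intro y hy hy0 hdiff
  have hyIcc : y ∈ Set.Icc (-Al lam) (Al lam) := Set.Ioo_subset_Icc_self hy
  have hlam0 : (0:ℝ) < lam := by linarith
  have hlam1 : (0:ℝ) < lam - 1 := by linarith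
  have ha : (0:ℝ) < lam ^ 2 - 1 := by nlinarith
  set x := phi y with hxdef
  have hx1 : 1 / lam ≤ x := (hrange y hyIcc).1
  have hx2 : x ≤ 1 / (lam - 1) := (hrange y hyIcc).2
  have hx0 : 0 < x := lt_of_lt_of_le (by positivity) hx1
  have hyabs : |y| < Al lam := abs_lt.mpr ⟨hy.1, hy.2⟩
  -- strict bounds
  have hxlt2 : x < 1 / (lam - 1) := by
    rcases lt_or_eq_of_le hx2 with h | h
    · exact h
    · exfalso
      have := himp y hyIcc
      rw [← hxdef, h] at this
      have : |y| = 0 := by linarith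
      exact hy0 (abs_eq_zero.mp this)
  have hxgt1 : 1 / lam < x := by
    rcases lt_or_eq_of_le hx1 with h | h
    · exact h
    · exfalso
      have h1 := himp y hyIcc
      rw [← hxdef, ← h] at h1
      have : |y| = Al lam := by
        unfold Al at *
        linarith
      linarith [hyabs]
  have hlx : 1 < lam * x := by
    rw [div_lt_iff₀ hlam0] at hxgt1
    linarith [mul_comm x lam]
  have hl1x : (lam - 1) * x < 1 := by
    rw [lt_div_iff₀ hlam1] at hxlt2
    linarith [mul_comm x (lam - 1)]
  set u : ℝ := (lam ^ 2 - 1) * x - lam with hu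
  have hu1 : -1 < u := by rw [hu]; nlinarith
  have hu2 : u < 1 := by rw [hu]; nlinarith
  have h1u : 0 < 1 - u ^ 2 := by nlinarith
  set s : ℝ := Real.sqrt (1 - u ^ 2) with hs
  set t : ℝ := Real.sqrt ((lam ^ 2 - 1) ^ 3) with ht
  have hs0 : 0 < s := Real.sqrt_pos.mpr h1u
  have ht0 : 0 < t := Real.sqrt_pos.mpr (by positivity)
  have hs2 : s ^ 2 = 1 - u ^ 2 := Real.sq_sqrt h1u.le
  have ht2 : t ^ 2 = (lam ^ 2 - 1) ^ 3 := Real.sq_sqrt (by positivity)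
  -- derivative of fl at x
  have hlin : HasDerivAt (fun Z : ℝ => (lam ^ 2 - 1) * Z - lam) (lam ^ 2 - 1) x := by
    simpa using ((hasDerivAt_id x).const_mul (lam ^ 2 - 1)).sub_const lam
  have harc : HasDerivAt (fun Z : ℝ => Real.arcsin ((lam ^ 2 - 1) * Z - lam))
      (1 / s * (lam ^ 2 - 1)) x :=
    by have h := (Real.hasDerivAt_arcsin (x := u) hu1.ne' hu2.ne).comp x hlin; exact h
  have hg : HasDerivAt (fun Z : ℝ => 1 - ((lam ^ 2 - 1) * Z - lam) ^ 2)
      (-(2 * u * (lam ^ 2 - 1))) x := by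
    have h := (hlin.pow 2).const_sub 1
    refine h.congr_deriv ?_
    rw [hu]; push_cast; ring
  have hsqrt' : HasDerivAt (fun Z : ℝ => Real.sqrt (1 - ((lam ^ 2 - 1) * Z - lam) ^ 2))
      (1 / (2 * s) * (-(2 * u * (lam ^ 2 - 1)))) x :=
    (Real.hasDerivAt_sqrt (ne_of_gt h1u)).comp x hg
  set D : ℝ := (1 / s * (lam ^ 2 - 1) - lam * (1 / (2 * s) * (-(2 * u * (lam ^ 2 - 1))))) / t
    with hD
  have hflD : HasDerivAt (fl lam) D x := by
    have h := ((harc.sub (hsqrt'.const_mul lam)).div_const t)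
    exact h
  set p := deriv phi y with hp
  have hcomp : HasDerivAt (fun τ => fl lam (phi τ)) (D * p) y :=
    hflD.comp y hdiff.hasDerivAt
  -- local formula for fl ∘ phi, giving (D*p)^2 = 1
  have hDp2 : (D * p) ^ 2 = 1 := by
    rcases lt_or_gt_of_ne hy0 with hneg | hpos
    · -- y < 0 : fl (phi t) = C + t near y
      have hAl : -Al lam < 0 := lt_of_le_of_lt hy.1.le hneg
      have hev : (fun τ => fl lam (phi τ)) =ᶠ[nhds y]
          (fun τ => fl lam (1 / (lam - 1)) + τ) := by
        filter_upwards [Ioo_mem_nhds hy.1 hneg] with τ hτ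
        have hτIcc : τ ∈ Set.Icc (-Al lam) (Al lam) :=
          ⟨hτ.1.le, le_trans hτ.2.le (by linarith)⟩
        rw [himp τ hτIcc, abs_of_neg hτ.2]
        ring
      have h1 : HasDerivAt (fun τ : ℝ => fl lam (1 / (lam - 1)) + τ) (D * p) y :=
        hcomp.congr_of_eventuallyEq hev.symm
      have h2 : HasDerivAt (fun τ : ℝ => fl lam (1 / (lam - 1)) + τ) 1 y := by
        simpa using (hasDerivAt_id y).const_add (fl lam (1 / (lam - 1)))
      rw [h1.unique h2]; norm_num
    · -- y > 0 : fl (phi t) = C - t near y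
      have hAl : 0 < Al lam := lt_of_lt_of_le hpos hy.2.le
      have hev : (fun τ => fl lam (phi τ)) =ᶠ[nhds y]
          (fun τ => fl lam (1 / (lam - 1)) - τ) := by
        filter_upwards [Ioo_mem_nhds hpos hy.2] with τ hτ
        have hτIcc : τ ∈ Set.Icc (-Al lam) (Al lam) :=
          ⟨le_trans (by linarith) hτ.1.le, hτ.2.le⟩
        rw [himp τ hτIcc, abs_of_pos hτ.1]
      have h1 : HasDerivAt (fun τ : ℝ => fl lam (1 / (lam - 1)) - τ) (D * p) y :=
        hcomp.congr_of_eventuallyEq hev.symm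
      have h2 : HasDerivAt (fun τ : ℝ => fl lam (1 / (lam - 1)) - τ) (-1) y := by
        simpa using (hasDerivAt_id y).const_sub (fl lam (1 / (lam - 1)))
      rw [h1.unique h2]; norm_num
  -- algebra
  have key : D * (s * t) = (lam ^ 2 - 1) * (1 + lam * u) := by
    rw [hD]; field_simp; ring
  have hp2 : p ^ 2 * ((lam ^ 2 - 1) * (1 + lam * u)) ^ 2 = (1 - u ^ 2) * (lam ^ 2 - 1) ^ 3 := by
    calc p ^ 2 * ((lam ^ 2 - 1) * (1 + lam * u)) ^ 2
        = (D * p) ^ 2 * (s * t) ^ 2 := by rw [← key]; ring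
      _ = (s * t) ^ 2 := by rw [hDp2]; ring
      _ = (1 - u ^ 2) * (lam ^ 2 - 1) ^ 3 := by rw [mul_pow, hs2, ht2]
  have h1lu : 1 + lam * u = (lam ^ 2 - 1) * (lam * x - 1) := by rw [hu]; ring
  have h1u2 : 1 - u ^ 2 = (lam ^ 2 - 1) * x ^ 2 - (lam ^ 2 - 1) * (lam * x - 1) ^ 2 := by
    rw [hu]; ring
  rw [h1lu, h1u2] at hp2
  have h3 : (p ^ 2 * (lam * x - 1) ^ 2 - (x ^ 2 - (lam * x - 1) ^ 2)) * (lam ^ 2 - 1) ^ 4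
      = 0 := by linear_combination hp2
  have h4 : p ^ 2 * (lam * x - 1) ^ 2 - (x ^ 2 - (lam * x - 1) ^ 2) = 0 :=
    (mul_eq_zero.mp h3).resolve_right (pow_ne_zero _ (ne_of_gt ha))
  have hden : 0 < lam * x - 1 := by linarith
  have hsqeq : Real.sqrt (1 + p ^ 2) = x / (lam * x - 1) := by
    have : 1 + p ^ 2 = (x / (lam * x - 1)) ^ 2 := by
      rw [div_pow, eq_div_iff (by positivity)]
      linear_combination h4
    rw [this]
    exact Real.sqrt_sq (le_of_lt (div_pos hx0 hden))
  rw [hsqeq, one_div_div]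
  field_simp
  ring
end
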